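/- Under the hypotheses of the previous lemma, define z₀ = z, Θₙ(t) = ∫_{t₀}^t Φ(zₙ(τ)) dτ/τ, ζₙ = lim_{τ→∞} zₙ(τ) e^{iΘₙ(τ)}, and zₙ₊₁(t) = ζₙ e^{-iΘₙ(t)}. Then all these quantities are well-defined (the limits exist), and |zₙ₊₁(t) - zₙ(t)| ≤ (E₀/(λ t^λ)) · K^n for all n ≥ 0 and t ≥ t₀, where K = C₀(E₀ t₀^{-λ} + |z(t₀)| λ)/λ². -/

import Mathlib

open Filter

open MeasureTheory Set intervalIntegral


lemma aux_exp_sub_one (x : ℝ) :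
    ‖Complex.exp (Complex.I * x) - 1‖ ≤ |x| := by
  have hd : ∀ θ : ℝ, HasDerivAt (fun s : ℝ => Complex.exp (Complex.I * s))
      (Complex.exp (Complex.I * θ) * Complex.I) θ := by
    intro θ
    have h1 : HasDerivAt (fun s : ℝ => ((s : ℂ))) 1 θ := (hasDerivAt_id θ).ofReal_comp
    have h2 := (h1.const_mul Complex.I).cexp
    simpa using h2
  have hint : IntervalIntegrable (fun θ : ℝ => Complex.exp (Complex.I * θ) * Complex.I)
      volume 0 x := (Continuous.intervalIntegrable (by continuity) 0 x)
  have hftc := intervalIntegral.integral_eq_sub_of_hasDerivAt (fun θ _ => hd θ) hint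
  have hval : Complex.exp (Complex.I * x) - 1 =
      ∫ θ in (0:ℝ)..x, Complex.exp (Complex.I * θ) * Complex.I := by
    rw [hftc]; simp
  rw [hval]
  calc ‖∫ θ in (0:ℝ)..x, Complex.exp (Complex.I * θ) * Complex.I‖ ≤ 1 * |x - 0| := by
        apply intervalIntegral.norm_integral_le_of_norm_le_const
        intro θ _
        simp [Complex.norm_exp]
    _ = |x| := by simp



lemma aux_interval_bound {E : Type*} [NormedAddCommGroup E] [NormedSpace ℝ E]
    {f : ℝ → E} {A lam t s : ℝ} (hlam : 0 < lam) (ht : 0 < t) (hts : t ≤ s)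
    (hfi : IntervalIntegrable f volume t s)
    (hbound : ∀ τ ∈ Set.Icc t s, ‖f τ‖ ≤ A * τ ^ (-1 - lam)) :
    ‖∫ τ in t..s, f τ‖ ≤ A / (lam * t ^ lam) := by
  have hln : lam ≠ 0 := hlam.ne'
  have hA : 0 ≤ A := by
    have h1 := hbound t ⟨le_rfl, hts⟩
    have h2 : (0:ℝ) < t ^ (-1 - lam) := Real.rpow_pos_of_pos ht _
    nlinarith [norm_nonneg (f t)]
  have hg : IntervalIntegrable (fun τ : ℝ => A * τ ^ (-1 - lam)) volume t s := by
    apply ContinuousOn.intervalIntegrable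
    intro τ hτ
    rw [uIcc_of_le hts] at hτ
    have hτ0 : τ ≠ 0 := ne_of_gt (lt_of_lt_of_le ht hτ.1)
    exact (continuousWithinAt_const.mul
      ((Real.continuousAt_rpow_const τ _ (Or.inl hτ0)).continuousWithinAt))
  have hle : ‖∫ τ in t..s, f τ‖ ≤ |∫ τ in t..s, A * τ ^ (-1 - lam)| := by
    apply intervalIntegral.norm_integral_le_abs_of_norm_le _ hg
    rw [uIoc_of_le hts]
    rw [ae_restrict_iff' measurableSet_Ioc]
    exact ae_of_all _ (fun τ hτ => hbound τ ⟨le_of_lt hτ.1, hτ.2⟩)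
  have hval : ∫ τ in t..s, A * τ ^ (-1 - lam) =
      A * ((t ^ (-lam) - s ^ (-lam)) / lam) := by
    rw [intervalIntegral.integral_const_mul, integral_rpow]
    · have hl : (-1 - lam) + 1 = -lam := by ring
      rw [hl, div_neg]; ring
    · refine Or.inr ⟨by intro h; nlinarith, ?_⟩
      rw [uIcc_of_le hts]
      rintro ⟨h0, _⟩
      linarith
  rw [hval] at hle
  refine le_trans hle ?_
  have h1 : (0:ℝ) ≤ s ^ (-lam) := Real.rpow_nonneg (le_trans ht.le hts) _
  have hsub : s ^ (-lam) ≤ t ^ (-lam) :=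
    Real.rpow_le_rpow_of_nonpos ht hts (by linarith)
  have h2 : t ^ (-lam) = (t ^ lam)⁻¹ := Real.rpow_neg ht.le lam
  have h3 : (0:ℝ) < t ^ lam := Real.rpow_pos_of_pos ht _
  rw [abs_of_nonneg (mul_nonneg hA (div_nonneg (by linarith) hlam.le))]
  calc A * ((t ^ (-lam) - s ^ (-lam)) / lam) ≤ A * (t ^ (-lam) / lam) := by
        gcongr
        linarith
    _ = A / (lam * t ^ lam) := by rw [h2]; ring

lemma aux_integrableOn {E : Type*} [NormedAddCommGroup E] {f : ℝ → E} {t₀ A lam : ℝ}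
    (ht₀ : 0 < t₀) (hlam : 0 < lam)
    (meas : AEStronglyMeasurable f (volume.restrict (Set.Ioi t₀)))
    (bound : ∀ τ ≥ t₀, ‖f τ‖ ≤ A * τ ^ (-1 - lam)) :
    IntegrableOn f (Set.Ioi t₀) := by
  have hg : IntegrableOn (fun τ : ℝ => A * τ ^ (-1 - lam)) (Set.Ioi t₀) :=
    (integrableOn_Ioi_rpow_of_lt (by linarith) ht₀).const_mul A
  exact Integrable.mono' hg meas
    ((ae_restrict_iff' measurableSet_Ioi).2
      (ae_of_all _ fun τ hτ => bound τ (le_of_lt hτ)))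

lemma aux_improper {E : Type*} [NormedAddCommGroup E] [NormedSpace ℝ E] [CompleteSpace E]
    {f : ℝ → E} {t₀ A lam : ℝ} (ht₀ : 0 < t₀) (hlam : 0 < lam)
    (hfi : IntegrableOn f (Set.Ioi t₀))
    (bound : ∀ τ ≥ t₀, ‖f τ‖ ≤ A * τ ^ (-1 - lam)) :
    Tendsto (fun t => ∫ τ in t₀..t, f τ) atTop (nhds (∫ τ in Set.Ioi t₀, f τ)) ∧
    ∀ t ≥ t₀, ‖(∫ τ in Set.Ioi t₀, f τ) - ∫ τ in t₀..t, f τ‖ ≤ A / (lam * t ^ lam) := by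
  have htend := MeasureTheory.intervalIntegral_tendsto_integral_Ioi t₀ hfi tendsto_id
  have hii : ∀ s, t₀ ≤ s → ∀ s', s ≤ s' → IntervalIntegrable f volume s s' := by
    intro s hs s' hs'
    rw [intervalIntegrable_iff_integrableOn_Ioc_of_le hs']
    exact hfi.mono_set (fun x hx => lt_of_le_of_lt hs hx.1)
  refine ⟨htend, fun t ht => ?_⟩
  have h1 : Tendsto (fun s => ‖(∫ τ in t₀..s, f τ) - ∫ τ in t₀..t, f τ‖) atTop
      (nhds ‖(∫ τ in Set.Ioi t₀, f τ) - ∫ τ in t₀..t, f τ‖) :=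
    (htend.sub tendsto_const_nhds).norm
  refine le_of_tendsto h1 ?_
  filter_upwards [eventually_ge_atTop t] with s hs
  rw [intervalIntegral.integral_interval_sub_left (hii t₀ le_rfl s (le_trans ht hs))
    (hii t₀ le_rfl t ht)]
  exact aux_interval_bound hlam (lt_of_lt_of_le ht₀ ht) hs (hii t ht s hs)
    (fun τ hτ => bound τ (le_trans ht hτ.1))

lemma aux_primitive_cont {f : ℝ → ℝ} {t₀ : ℝ} (hf : ContinuousOn f (Set.Ici t₀)) :
    ContinuousOn (fun t => ∫ τ in t₀..t, f τ) (Set.Ici t₀) := by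
  intro x hx
  have hint : IntervalIntegrable f volume (min t₀ t₀) (max t₀ (x + 1)) := by
    rw [min_self]
    apply (hf.mono _).intervalIntegrable
    rw [uIcc_of_le (le_max_left t₀ (x + 1))]
    exact fun y hy => hy.1
  have h := intervalIntegral.continuousWithinAt_primitive (measure_singleton x) hint
  apply h.mono_of_mem_nhdsWithin
  rw [mem_nhdsWithin]
  refine ⟨Set.Iio (x + 1), isOpen_Iio, by simp, ?_⟩
  rintro y ⟨hy1, hy2⟩
  exact ⟨hy2, hy1.le⟩


noncomputable def auxTheta (t₀ : ℝ) (Φ : ℂ → ℝ) (f : ℝ → ℂ) (t : ℝ) : ℝ :=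
  ∫ τ in t₀..t, Φ (f τ) / τ

noncomputable def auxZeta (t₀ : ℝ) (Φ : ℂ → ℝ) (f : ℝ → ℂ) : ℂ :=
  limUnder atTop fun τ => f τ * Complex.exp (Complex.I * (auxTheta t₀ Φ f τ : ℂ))

noncomputable def auxZ (t₀ : ℝ) (Φ : ℂ → ℝ) (z : ℝ → ℂ) : ℕ → ℝ → ℂ
  | 0 => z
  | n + 1 => fun t => auxZeta t₀ Φ (auxZ t₀ Φ z n) *
      Complex.exp (-Complex.I * (auxTheta t₀ Φ (auxZ t₀ Φ z n) t : ℂ))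

example (t₀ : ℝ) (Φ : ℂ → ℝ) (z : ℝ → ℂ) : auxZ t₀ Φ z 0 = z := rfl
example (t₀ : ℝ) (Φ : ℂ → ℝ) (z : ℝ → ℂ) (n : ℕ) (t : ℝ) :
    auxZ t₀ Φ z (n+1) t = auxZeta t₀ Φ (auxZ t₀ Φ z n) *
      Complex.exp (-Complex.I * (auxTheta t₀ Φ (auxZ t₀ Φ z n) t : ℂ)) := rfl

section
variable {t₀ C₀ E₀ lam : ℝ} {Φ : ℂ → ℝ} {J : ℝ → ℂ} {z : ℝ → ℂ}

lemma aux_main (ht₀ : 1 ≤ t₀) (hC₀ : 0 < C₀) (hE₀ : 0 < E₀) (hlam : 0 < lam)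
    (hΦ : ∀ z w : ℂ, |Φ z - Φ w| ≤ C₀ * ‖z - w‖)
    (hJ : ∀ t ≥ t₀, ‖J t‖ ≤ E₀ * t ^ (-1 - lam))
    (hz : ∀ t ≥ t₀, HasDerivAt z
      (-Complex.I * (((Φ (z t) : ℝ) : ℂ) * z t / (t : ℂ) + J t)) t) :
    ∀ n : ℕ,
      ContinuousOn (auxZ t₀ Φ z n) (Set.Ici t₀) ∧
      Tendsto (fun τ => auxZ t₀ Φ z n τ *
          Complex.exp (Complex.I * (auxTheta t₀ Φ (auxZ t₀ Φ z n) τ : ℂ)))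
        atTop (nhds (auxZeta t₀ Φ (auxZ t₀ Φ z n))) ∧
      ‖auxZeta t₀ Φ (auxZ t₀ Φ z n)‖ ≤
        ‖z t₀‖ + E₀ / (lam * t₀ ^ lam) ∧
      (∀ t ≥ t₀, ‖auxZ t₀ Φ z (n + 1) t - auxZ t₀ Φ z n t‖ ≤
        E₀ / (lam * t ^ lam) *
          (C₀ * (E₀ * t₀ ^ (-lam) + ‖z t₀‖ * lam) / lam ^ 2) ^ n) := by
  have ht₀0 : (0:ℝ) < t₀ := lt_of_lt_of_le one_pos ht₀
  have hΦc : Continuous Φ := by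
    have hl : LipschitzWith (Real.toNNReal C₀) Φ := by
      apply LipschitzWith.of_dist_le_mul
      intro a b
      rw [Real.dist_eq, Complex.dist_eq, Real.coe_toNNReal C₀ hC₀.le]
      exact hΦ a b
    exact hl.continuous
  have hint_cont : ∀ {f : ℝ → ℂ}, ContinuousOn f (Set.Ici t₀) →
      ContinuousOn (fun s => Φ (f s) / s) (Set.Ici t₀) := by
    intro f hf
    exact (hΦc.comp_continuousOn hf).div continuousOn_id
      (fun s hs => ne_of_gt (lt_of_lt_of_le ht₀0 hs))
  have hθc : ∀ {f : ℝ → ℂ}, ContinuousOn f (Set.Ici t₀) →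
      ContinuousOn (auxTheta t₀ Φ f) (Set.Ici t₀) :=
    fun hf => aux_primitive_cont (hint_cont hf)
  intro n
  induction n with
  | zero =>
    have hZ0 : auxZ t₀ Φ z 0 = z := rfl
    rw [hZ0]
    have hzc : ContinuousOn z (Set.Ici t₀) :=
      fun t ht => ((hz t ht).continuousAt).continuousWithinAt
    have hf₀ca : ∀ x ≥ t₀, ContinuousAt (fun τ : ℝ => Φ (z τ) / τ) x := by
      intro x hx
      exact (hΦc.continuousAt.comp ((hz x hx).continuousAt)).div continuousAt_id
        (ne_of_gt (lt_of_lt_of_le ht₀0 hx))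
    have hf₀Ioi : ContinuousOn (fun τ : ℝ => Φ (z τ) / τ) (Set.Ioi t₀) :=
      fun x hx => (hf₀ca x (le_of_lt hx)).continuousWithinAt
    have hΘcont : ContinuousOn (auxTheta t₀ Φ z) (Set.Ici t₀) := hθc hzc
    have hΘd : ∀ x ∈ Set.Ioi t₀, HasDerivAt (auxTheta t₀ Φ z) (Φ (z x) / x) x := by
      intro x hx
      apply intervalIntegral.integral_hasDerivAt_right
      · apply ContinuousOn.intervalIntegrable
        intro τ hτ
        rw [uIcc_of_le (le_of_lt hx)] at hτ
        exact (hf₀ca τ hτ.1).continuousWithinAt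
      · exact hf₀Ioi.stronglyMeasurableAtFilter isOpen_Ioi x hx
      · exact hf₀ca x (le_of_lt hx)
    set w : ℝ → ℂ := fun τ => z τ * Complex.exp (Complex.I * ((auxTheta t₀ Φ z τ : ℝ) : ℂ)) with hwdef
    set g : ℝ → ℂ := fun τ => -Complex.I * J τ * Complex.exp (Complex.I * ((auxTheta t₀ Φ z τ : ℝ) : ℂ)) with hgdef
    have hexpc : ContinuousOn (fun τ : ℝ => Complex.exp (Complex.I * ((auxTheta t₀ Φ z τ : ℝ) : ℂ)))
        (Set.Ici t₀) :=
      Complex.continuous_exp.comp_continuousOn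
        ((continuous_const.mul Complex.continuous_ofReal).comp_continuousOn hΘcont)
    have hwcont : ContinuousOn w (Set.Ici t₀) := hzc.mul hexpc
    have hwd : ∀ x ∈ Set.Ioi t₀, HasDerivAt w (g x) x := by
      intro x hx
      have h1 : HasDerivAt (fun s : ℝ => Complex.I * ((auxTheta t₀ Φ z s : ℝ) : ℂ))
          (Complex.I * ((Φ (z x) / x : ℝ) : ℂ)) x :=
        ((hΘd x hx).ofReal_comp).const_mul Complex.I
      have h2 := h1.cexp
      have h3 := (hz x (le_of_lt hx)).mul h2
      convert h3 using 1
      push_cast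
      show -Complex.I * J x * Complex.exp (Complex.I * ((auxTheta t₀ Φ z x : ℝ) : ℂ)) = _
      rw [Complex.ofReal_div]
      ring
      all_goals rfl
    have hgm : AEStronglyMeasurable g (volume.restrict (Set.Ioi t₀)) := by
      apply ((measurable_deriv w).aestronglyMeasurable).congr
      rw [Filter.EventuallyEq, ae_restrict_iff' measurableSet_Ioi]
      exact ae_of_all _ fun x hx => ((hwd x hx).deriv)
    have habs1 : ∀ θ : ℝ, ‖Complex.exp (Complex.I * (θ : ℂ))‖ = 1 := by
      intro θ
      rw [Complex.norm_exp]
      simp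
    have habs2 : ∀ θ : ℝ, ‖Complex.exp (-Complex.I * (θ : ℂ))‖ = 1 := by
      intro θ
      rw [Complex.norm_exp]
      simp
    have hgbd : ∀ τ ≥ t₀, ‖g τ‖ ≤ E₀ * τ ^ (-1 - lam) := by
      intro τ hτ
      have h1 : ‖g τ‖ = ‖J τ‖ := by
        rw [hgdef]
        simp only [norm_mul, habs1, mul_one]
        simp
      rw [h1]
      exact hJ τ hτ
    have hgi : IntegrableOn g (Set.Ioi t₀) := aux_integrableOn ht₀0 hlam hgm hgbd
    obtain ⟨htend, htail⟩ := aux_improper ht₀0 hlam hgi hgbd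
    have hgiv : ∀ t ≥ t₀, IntervalIntegrable g volume t₀ t := by
      intro t ht
      rw [intervalIntegrable_iff_integrableOn_Ioc_of_le ht]
      exact hgi.mono_set Set.Ioc_subset_Ioi_self
    have hwrepr : ∀ t ≥ t₀, w t = w t₀ + ∫ τ in t₀..t, g τ := by
      intro t ht
      have h := intervalIntegral.integral_eq_sub_of_hasDeriv_right_of_le ht
        (hwcont.mono Set.Icc_subset_Ici_self)
        (fun x hx => ((hwd x (Set.mem_Ioi.2 hx.1)).hasDerivWithinAt)) (hgiv t ht)
      rw [h]
      ring
    set L : ℂ := w t₀ + ∫ τ in Set.Ioi t₀, g τ with hL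
    have hwt : Tendsto w atTop (nhds L) := by
      apply Tendsto.congr' _ (tendsto_const_nhds.add htend)
      filter_upwards [eventually_ge_atTop t₀] with t ht
      exact (hwrepr t ht).symm
    have hζeq : auxZeta t₀ Φ z = L := by
      rw [show auxZeta t₀ Φ z = limUnder atTop w from rfl]
      exact hwt.limUnder_eq
    have hdist : ∀ t ≥ t₀, ‖L - w t‖ ≤ E₀ / (lam * t ^ lam) := by
      intro t ht
      have h2 := htail t ht
      have h3 : L - w t = (∫ τ in Set.Ioi t₀, g τ) - ∫ τ in t₀..t, g τ := by
        rw [hL, hwrepr t ht]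
        ring
      rw [h3]
      exact h2
    refine ⟨hzc, ?_, ?_, ?_⟩
    · rw [hζeq]
      exact hwt
    · have h1 := hdist t₀ le_rfl
      have h2 : ‖w t₀‖ = ‖z t₀‖ := by
        rw [hwdef]
        simp only [norm_mul, habs1, mul_one]
      calc ‖auxZeta t₀ Φ z‖ = ‖L - w t₀ + w t₀‖ := by
            rw [hζeq]; congr 1; ring
        _ ≤ ‖L - w t₀‖ + ‖w t₀‖ := norm_add_le _ _
        _ ≤ E₀ / (lam * t₀ ^ lam) + ‖z t₀‖ := add_le_add h1 h2.le
        _ = ‖z t₀‖ + E₀ / (lam * t₀ ^ lam) := by ring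
    · intro t ht
      show ‖auxZeta t₀ Φ z *
        Complex.exp (-Complex.I * ((auxTheta t₀ Φ z t : ℝ) : ℂ)) - z t‖ ≤ _
      have hone : Complex.exp (-Complex.I * ((auxTheta t₀ Φ z t : ℝ) : ℂ)) *
          Complex.exp (Complex.I * ((auxTheta t₀ Φ z t : ℝ) : ℂ)) = 1 := by
        rw [← Complex.exp_add]
        norm_num
      have hid : L * Complex.exp (-Complex.I * ((auxTheta t₀ Φ z t : ℝ) : ℂ)) - z t =
          Complex.exp (-Complex.I * ((auxTheta t₀ Φ z t : ℝ) : ℂ)) * (L - w t) := by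
        rw [hwdef, mul_sub]
        have h3 : Complex.exp (-Complex.I * ((auxTheta t₀ Φ z t : ℝ) : ℂ)) *
            (z t * Complex.exp (Complex.I * ((auxTheta t₀ Φ z t : ℝ) : ℂ))) = z t := by
          rw [mul_comm (z t), ← mul_assoc, hone, one_mul]
        rw [h3]
        ring
      rw [hζeq, hid, norm_mul, habs2, one_mul, pow_zero, mul_one]
      exact hdist t ht
  | succ n ih =>
    obtain ⟨hcont, htendn, hζbd, hbd⟩ := ih
    have hlam0 : lam ≠ 0 := hlam.ne'
    have habs1 : ∀ θ : ℝ, ‖Complex.exp (Complex.I * (θ : ℂ))‖ = 1 := by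
      intro θ
      rw [Complex.norm_exp]
      simp
    have habs2 : ∀ θ : ℝ, ‖Complex.exp (-Complex.I * (θ : ℂ))‖ = 1 := by
      intro θ
      rw [Complex.norm_exp]
      simp
    have hK0 : 0 ≤ C₀ * (E₀ * t₀ ^ (-lam) + ‖z t₀‖ * lam) / lam ^ 2 := by
      apply div_nonneg _ (by positivity)
      apply mul_nonneg hC₀.le
      exact add_nonneg (mul_nonneg hE₀.le (Real.rpow_nonneg ht₀0.le _))
        (mul_nonneg (norm_nonneg _) hlam.le)
    have hZn1 : ∀ t : ℝ, auxZ t₀ Φ z (n + 1) t = auxZeta t₀ Φ (auxZ t₀ Φ z n) *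
        Complex.exp (-Complex.I * ((auxTheta t₀ Φ (auxZ t₀ Φ z n) t : ℝ) : ℂ)) :=
      fun t => rfl
    have hcont1 : ContinuousOn (auxZ t₀ Φ z (n + 1)) (Set.Ici t₀) := by
      apply ContinuousOn.mul continuousOn_const
      exact Complex.continuous_exp.comp_continuousOn
        ((continuous_const.mul Complex.continuous_ofReal).comp_continuousOn (hθc hcont))
    set d : ℝ → ℝ := fun s => (Φ (auxZ t₀ Φ z (n + 1) s) - Φ (auxZ t₀ Φ z n s)) / s with hddef
    have hdcont : ContinuousOn d (Set.Ici t₀) :=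
      ((hΦc.comp_continuousOn hcont1).sub (hΦc.comp_continuousOn hcont)).div
        continuousOn_id (fun s hs => ne_of_gt (lt_of_lt_of_le ht₀0 hs))
    have hA0 : 0 ≤ C₀ * E₀ *
        (C₀ * (E₀ * t₀ ^ (-lam) + ‖z t₀‖ * lam) / lam ^ 2) ^ n / lam :=
      div_nonneg (mul_nonneg (mul_nonneg hC₀.le hE₀.le) (pow_nonneg hK0 n)) hlam.le
    have hdbd : ∀ s ≥ t₀, ‖d s‖ ≤ (C₀ * E₀ *
        (C₀ * (E₀ * t₀ ^ (-lam) + ‖z t₀‖ * lam) / lam ^ 2) ^ n / lam) *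
          s ^ (-1 - lam) := by
      intro s hs
      have hs0 : (0:ℝ) < s := lt_of_lt_of_le ht₀0 hs
      have hsl : (0:ℝ) < s ^ lam := Real.rpow_pos_of_pos hs0 _
      have h1 : |Φ (auxZ t₀ Φ z (n + 1) s) - Φ (auxZ t₀ Φ z n s)| ≤
          C₀ * (E₀ / (lam * s ^ lam) *
            (C₀ * (E₀ * t₀ ^ (-lam) + ‖z t₀‖ * lam) / lam ^ 2) ^ n) :=
        le_trans (hΦ _ _) (mul_le_mul_of_nonneg_left (hbd s hs) hC₀.le)
      rw [hddef, Real.norm_eq_abs, abs_div, abs_of_pos hs0]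
      calc |Φ (auxZ t₀ Φ z (n + 1) s) - Φ (auxZ t₀ Φ z n s)| / s ≤
          (C₀ * (E₀ / (lam * s ^ lam) *
            (C₀ * (E₀ * t₀ ^ (-lam) + ‖z t₀‖ * lam) / lam ^ 2) ^ n)) / s :=
            (div_le_div_iff_of_pos_right hs0).2 h1
        _ = _ := by
            rw [show (-1 - lam : ℝ) = -(lam + 1) by ring, Real.rpow_neg hs0.le,
              Real.rpow_add hs0, Real.rpow_one]
            field_simp
    have hdm : AEStronglyMeasurable d (volume.restrict (Set.Ioi t₀)) :=
      (hdcont.mono Set.Ioi_subset_Ici_self).aestronglyMeasurable measurableSet_Ioi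
    have hdi : IntegrableOn d (Set.Ioi t₀) := aux_integrableOn ht₀0 hlam hdm hdbd
    obtain ⟨hδtend, hδtail⟩ := aux_improper ht₀0 hlam hdi hdbd
    have hθdiff : ∀ t ≥ t₀, auxTheta t₀ Φ (auxZ t₀ Φ z (n + 1)) t -
        auxTheta t₀ Φ (auxZ t₀ Φ z n) t = ∫ τ in t₀..t, d τ := by
      intro t ht
      have hi1 : IntervalIntegrable (fun τ => Φ (auxZ t₀ Φ z (n + 1) τ) / τ) volume t₀ t :=
        ContinuousOn.intervalIntegrable ((hint_cont hcont1).mono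
          (by rw [uIcc_of_le ht]; exact Set.Icc_subset_Ici_self))
      have hi2 : IntervalIntegrable (fun τ => Φ (auxZ t₀ Φ z n τ) / τ) volume t₀ t :=
        ContinuousOn.intervalIntegrable ((hint_cont hcont).mono
          (by rw [uIcc_of_le ht]; exact Set.Icc_subset_Ici_self))
      show (∫ τ in t₀..t, Φ (auxZ t₀ Φ z (n + 1) τ) / τ) -
        (∫ τ in t₀..t, Φ (auxZ t₀ Φ z n τ) / τ) = _
      rw [← intervalIntegral.integral_sub hi1 hi2]
      exact intervalIntegral.integral_congr (fun τ _ => (sub_div _ _ _).symm)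
    have htendn1 : Tendsto (fun τ => auxZ t₀ Φ z (n + 1) τ *
        Complex.exp (Complex.I * ((auxTheta t₀ Φ (auxZ t₀ Φ z (n + 1)) τ : ℝ) : ℂ)))
        atTop (nhds (auxZeta t₀ Φ (auxZ t₀ Φ z n) *
          Complex.exp (Complex.I * ((∫ τ in Set.Ioi t₀, d τ : ℝ) : ℂ)))) := by
      have hin : Tendsto (fun τ => Complex.exp (Complex.I * ((∫ s in t₀..τ, d s : ℝ) : ℂ)))
          atTop (nhds (Complex.exp (Complex.I * ((∫ τ in Set.Ioi t₀, d τ : ℝ) : ℂ)))) :=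
        (Complex.continuous_exp.tendsto _).comp
          (((Complex.continuous_ofReal.tendsto _).comp hδtend).const_mul Complex.I)
      apply Tendsto.congr' _ (hin.const_mul (auxZeta t₀ Φ (auxZ t₀ Φ z n)))
      filter_upwards [eventually_ge_atTop t₀] with τ hτ
      have he : Complex.I * ((∫ s in t₀..τ, d s : ℝ) : ℂ) =
          -Complex.I * ((auxTheta t₀ Φ (auxZ t₀ Φ z n) τ : ℝ) : ℂ) +
          Complex.I * ((auxTheta t₀ Φ (auxZ t₀ Φ z (n + 1)) τ : ℝ) : ℂ) := by
        rw [← hθdiff τ hτ]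
        push_cast
        ring
      rw [hZn1 τ, mul_assoc, ← Complex.exp_add, ← he]
    have hζn1 : auxZeta t₀ Φ (auxZ t₀ Φ z (n + 1)) = auxZeta t₀ Φ (auxZ t₀ Φ z n) *
        Complex.exp (Complex.I * ((∫ τ in Set.Ioi t₀, d τ : ℝ) : ℂ)) := by
      rw [show auxZeta t₀ Φ (auxZ t₀ Φ z (n + 1)) = limUnder atTop
        (fun τ => auxZ t₀ Φ z (n + 1) τ *
          Complex.exp (Complex.I * ((auxTheta t₀ Φ (auxZ t₀ Φ z (n + 1)) τ : ℝ) : ℂ)))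
        from rfl]
      exact htendn1.limUnder_eq
    refine ⟨hcont1, ?_, ?_, ?_⟩
    · rw [hζn1]
      exact htendn1
    · rw [hζn1, norm_mul, habs1, mul_one]
      exact hζbd
    · intro t ht
      have h1 : auxZ t₀ Φ z (n + 1 + 1) t = auxZeta t₀ Φ (auxZ t₀ Φ z (n + 1)) *
          Complex.exp (-Complex.I * ((auxTheta t₀ Φ (auxZ t₀ Φ z (n + 1)) t : ℝ) : ℂ)) := rfl
      have hid : auxZ t₀ Φ z (n + 1 + 1) t - auxZ t₀ Φ z (n + 1) t =
          auxZeta t₀ Φ (auxZ t₀ Φ z n) *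
            Complex.exp (-Complex.I * ((auxTheta t₀ Φ (auxZ t₀ Φ z n) t : ℝ) : ℂ)) *
            (Complex.exp (Complex.I *
              (((∫ τ in Set.Ioi t₀, d τ) - ∫ τ in t₀..t, d τ : ℝ) : ℂ)) - 1) := by
        rw [h1, hZn1 t, hζn1, mul_sub, mul_one]
        congr 1
        rw [mul_assoc, mul_assoc, ← Complex.exp_add, ← Complex.exp_add]
        congr 1
        rw [← hθdiff t ht]
        push_cast
        congr 1
        ring
      rw [hid, norm_mul, norm_mul, habs2, mul_one]
      calc ‖auxZeta t₀ Φ (auxZ t₀ Φ z n)‖ *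
          ‖Complex.exp (Complex.I *
            (((∫ τ in Set.Ioi t₀, d τ) - ∫ τ in t₀..t, d τ : ℝ) : ℂ)) - 1‖ ≤
          (‖z t₀‖ + E₀ / (lam * t₀ ^ lam)) *
            ((C₀ * E₀ * (C₀ * (E₀ * t₀ ^ (-lam) + ‖z t₀‖ * lam) / lam ^ 2) ^ n
              / lam) / (lam * t ^ lam)) := by
            apply mul_le_mul hζbd _ (norm_nonneg _)
              (add_nonneg (norm_nonneg _) (by positivity))
            calc ‖Complex.exp (Complex.I *
                (((∫ τ in Set.Ioi t₀, d τ) - ∫ τ in t₀..t, d τ : ℝ) : ℂ)) - 1‖ ≤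
                |(∫ τ in Set.Ioi t₀, d τ) - ∫ τ in t₀..t, d τ| := aux_exp_sub_one _
              _ ≤ _ := hδtail t ht
        _ = E₀ / (lam * t ^ lam) *
            (C₀ * (E₀ * t₀ ^ (-lam) + ‖z t₀‖ * lam) / lam ^ 2) ^ (n + 1) := by
            rw [pow_succ, Real.rpow_neg ht₀0.le]
            have hT : t ^ lam ≠ 0 := ne_of_gt (Real.rpow_pos_of_pos (lt_of_lt_of_le ht₀0 ht) _)
            have hT₀ : t₀ ^ lam ≠ 0 := ne_of_gt (Real.rpow_pos_of_pos ht₀0 _)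
            field_simp
            have e1 : lam * lam⁻¹ = 1 := mul_inv_cancel₀ hlam0
            have e2 : t₀ ^ lam * (t₀ ^ lam)⁻¹ = 1 := mul_inv_cancel₀ hT₀
            linear_combination (-(‖z t₀‖ * lam * t₀ ^ lam * C₀ + E₀ * C₀) *
              (‖z t₀‖ * lam * t₀ ^ lam * C₀ * lam⁻¹ ^ 2 * (t₀ ^ lam)⁻¹ + E₀ * C₀ * lam⁻¹ ^ 2 * (t₀ ^ lam)⁻¹) ^ n *
              (lam * lam⁻¹ + 1) * (t₀ ^ lam * (t₀ ^ lam)⁻¹)) * e1 +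
              (-(‖z t₀‖ * lam * t₀ ^ lam * C₀ + E₀ * C₀) *
              (‖z t₀‖ * lam * t₀ ^ lam * C₀ * lam⁻¹ ^ 2 * (t₀ ^ lam)⁻¹ + E₀ * C₀ * lam⁻¹ ^ 2 * (t₀ ^ lam)⁻¹) ^ n) * e2

end


/-- The iteration z₀ = z, Θₙ(t) = ∫_{t₀}^t Φ(zₙ(τ))dτ/τ,
ζₙ = lim_{τ→∞} zₙ(τ)e^{iΘₙ(τ)}, zₙ₊₁(t) = ζₙe^{-iΘₙ(t)} is well-defined and
satisfies |zₙ₊₁(t) - zₙ(t)| ≤ (E₀/(λt^λ))Kⁿ with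
K = C₀(E₀t₀^{-λ} + |z(t₀)|λ)/λ². -/
theorem stmt8 (t₀ C₀ E₀ lam : ℝ) (ht₀ : 1 ≤ t₀) (hC₀ : 0 < C₀) (hE₀ : 0 < E₀)
    (hlam : 0 < lam)
    (Φ : ℂ → ℝ) (hΦ : ∀ z w : ℂ, |Φ z - Φ w| ≤ C₀ * ‖z - w‖)
    (J : ℝ → ℂ) (hJ : ∀ t ≥ t₀, ‖J t‖ ≤ E₀ * t ^ (-1 - lam))
    (z : ℝ → ℂ)
    (hz : ∀ t ≥ t₀, HasDerivAt z
      (-Complex.I * (((Φ (z t) : ℝ) : ℂ) * z t / (t : ℂ) + J t)) t)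
    (hK : C₀ * (E₀ * t₀ ^ (-lam) + ‖z t₀‖ * lam) / lam ^ 2 < 1) :
    ∃ (Z : ℕ → ℝ → ℂ) (Θ : ℕ → ℝ → ℝ) (ζ : ℕ → ℂ),
      Z 0 = z ∧
      (∀ n, ∀ t ≥ t₀, Θ n t = ∫ τ in t₀..t, Φ (Z n τ) / τ) ∧
      (∀ n, Tendsto (fun τ => Z n τ * Complex.exp (Complex.I * (Θ n τ : ℂ)))
        atTop (nhds (ζ n))) ∧
      (∀ n, ∀ t ≥ t₀, Z (n + 1) t = ζ n * Complex.exp (-Complex.I * (Θ n t : ℂ))) ∧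
      (∀ n : ℕ, ∀ t ≥ t₀, ‖Z (n + 1) t - Z n t‖ ≤
        E₀ / (lam * t ^ lam) *
          (C₀ * (E₀ * t₀ ^ (-lam) + ‖z t₀‖ * lam) / lam ^ 2) ^ n) := by
  have key := aux_main ht₀ hC₀ hE₀ hlam hΦ hJ hz
  exact ⟨auxZ t₀ Φ z, fun n => auxTheta t₀ Φ (auxZ t₀ Φ z n),
    fun n => auxZeta t₀ Φ (auxZ t₀ Φ z n), rfl, fun n t _ => rfl,
    fun n => (key n).2.1, fun n t _ => rfl, fun n => (key n).2.2.2⟩
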